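/- Let λ > 0, c > 0, and θ > 0. Let u : [0, θ] → ℝ be differentiable with u(t) ≥ 0 for all t ∈ [0, θ], and suppose u'(t) ≤ λ·u(t) − c whenever u(t) > 0. If c ≥ λ·u(0) / (1 − e^{−λθ}), then u(θ) = 0. -/

import Mathlib

/-- Finite-time synchronization criterion: if `u ≥ 0` is
differentiable on `[0, θ]` with `u' ≤ λ·u − c` wherever `u > 0`, and the coupling
strength satisfies `c ≥ λ·u(0)/(1 − e^{−λθ})`, then `u(θ) = 0`. -/
theorem finite_time_synchronization (lam c θ : ℝ)
    (hlam : 0 < lam) (hc : 0 < c) (hθ : 0 < θ)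
    (u u' : ℝ → ℝ)
    (hderiv : ∀ t ∈ Set.Icc (0 : ℝ) θ, HasDerivAt u (u' t) t)
    (hnonneg : ∀ t ∈ Set.Icc (0 : ℝ) θ, 0 ≤ u t)
    (hineq : ∀ t ∈ Set.Icc (0 : ℝ) θ, 0 < u t → u' t ≤ lam * u t - c)
    (hcbig : lam * u 0 / (1 - Real.exp (-(lam * θ))) ≤ c) :
    u θ = 0 := by
  have hexp1 : Real.exp (-(lam * θ)) < 1 := by
    rw [Real.exp_lt_one_iff]
    nlinarith
  have hexp : (0:ℝ) < 1 - Real.exp (-(lam * θ)) := by linarith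
  have hcbig' : lam * u 0 ≤ c * (1 - Real.exp (-(lam * θ))) :=
    (div_le_iff₀ hexp).mp hcbig
  set φ : ℝ → ℝ := fun t => Real.exp (-(lam * t)) * (lam * u t - c) with hφdef
  have hφderiv : ∀ t ∈ Set.Icc (0:ℝ) θ,
      HasDerivAt φ (lam * Real.exp (-(lam * t)) * (u' t - lam * u t + c)) t := by
    intro t ht
    have h0 : HasDerivAt (fun x : ℝ => -(lam * x)) (-lam) t := by
      simpa using (hasDerivAt_id t).const_mul (-lam)
    have h1 : HasDerivAt (fun x : ℝ => Real.exp (-(lam * x)))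
        (-lam * Real.exp (-(lam * t))) t := by
      simpa [mul_comm] using h0.exp
    have h2 : HasDerivAt (fun x => lam * u x - c) (lam * u' t) t :=
      ((hderiv t ht).const_mul lam).sub_const c
    have := h1.mul h2
    refine this.congr_deriv ?_
    ring
  have key : ∀ a ∈ Set.Icc (0:ℝ) θ, (∀ t ∈ Set.Ioo a θ, 0 < u t) → φ θ ≤ φ a := by
    intro a ha hpos
    have hmono : AntitoneOn φ (Set.Icc a θ) := by
      apply antitoneOn_of_deriv_nonpos (convex_Icc a θ)
      · intro t ht
        exact ((hφderiv t ⟨le_trans ha.1 ht.1, ht.2⟩).continuousAt).continuousWithinAt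
      · intro t ht
        rw [interior_Icc] at ht
        exact ((hφderiv t ⟨le_trans ha.1 ht.1.le, ht.2.le⟩).differentiableAt).differentiableWithinAt
      · intro t ht
        rw [interior_Icc] at ht
        have htIcc : t ∈ Set.Icc (0:ℝ) θ := ⟨le_trans ha.1 ht.1.le, ht.2.le⟩
        rw [(hφderiv t htIcc).deriv]
        have hu := hineq t htIcc (hpos t ht)
        have hep : (0:ℝ) < Real.exp (-(lam * t)) := Real.exp_pos _
        have h3 : u' t - lam * u t + c ≤ 0 := by linarith
        have := mul_nonpos_of_nonneg_of_nonpos (mul_nonneg hlam.le hep.le) h3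
        linarith
    exact hmono ⟨le_refl a, ha.2⟩ ⟨ha.2, le_refl θ⟩ ha.2
  have hθmem : θ ∈ Set.Icc (0:ℝ) θ := ⟨hθ.le, le_refl θ⟩
  have hepθ : (0:ℝ) < Real.exp (-(lam * θ)) := Real.exp_pos _
  by_cases hz : ∃ t ∈ Set.Icc (0:ℝ) θ, u t = 0
  · obtain ⟨t0, ht0, hut0⟩ := hz
    set S := {t : ℝ | t ∈ Set.Icc (0:ℝ) θ ∧ u t = 0} with hS
    have hSne : S.Nonempty := ⟨t0, ht0, hut0⟩
    have hSbdd : BddAbove S := ⟨θ, fun x hx => hx.1.2⟩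
    set s := sSup S with hsdef
    have hsmem : s ∈ Set.Icc (0:ℝ) θ :=
      ⟨le_trans ht0.1 (le_csSup hSbdd ⟨ht0, hut0⟩), csSup_le hSne (fun x hx => hx.1.2)⟩
    have hcl : s ∈ closure S := csSup_mem_closure hSne hSbdd
    have hne : (nhdsWithin s S).NeBot := mem_closure_iff_nhdsWithin_neBot.mp hcl
    have hcont : ContinuousAt u s := (hderiv s hsmem).continuousAt
    have htend : Filter.Tendsto u (nhdsWithin s S) (nhds (u s)) :=
      hcont.continuousWithinAt.tendsto
    have htend0 : Filter.Tendsto u (nhdsWithin s S) (nhds 0) := by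
      apply Filter.Tendsto.congr' ?_ tendsto_const_nhds
      filter_upwards [self_mem_nhdsWithin] with x hx
      exact hx.2.symm
    have hus : u s = 0 := tendsto_nhds_unique htend htend0
    rcases eq_or_lt_of_le hsmem.2 with heq | hlt
    · rw [← heq]; exact hus
    · exfalso
      have hpos : ∀ t ∈ Set.Ioo s θ, 0 < u t := by
        intro t ht
        have htIcc : t ∈ Set.Icc (0:ℝ) θ := ⟨le_trans hsmem.1 ht.1.le, ht.2.le⟩
        rcases lt_or_eq_of_le (hnonneg t htIcc) with h | h
        · exact h
        · exact absurd (le_csSup hSbdd ⟨htIcc, h.symm⟩) (not_le.mpr ht.1)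
      have hφle := key s hsmem hpos
      have hexps : Real.exp (-(lam * θ)) < Real.exp (-(lam * s)) := by
        apply Real.exp_lt_exp.mpr
        nlinarith
      have huθ := hnonneg θ hθmem
      simp only [hφdef, hus] at hφle
      nlinarith [mul_nonneg hepθ.le (mul_nonneg hlam.le huθ)]
  · push_neg at hz
    have hpos : ∀ t ∈ Set.Ioo (0:ℝ) θ, 0 < u t := by
      intro t ht
      have htIcc : t ∈ Set.Icc (0:ℝ) θ := ⟨ht.1.le, ht.2.le⟩
      exact lt_of_le_of_ne (hnonneg t htIcc) (fun h => hz t htIcc h.symm)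
    have hφle := key 0 ⟨le_refl 0, hθ.le⟩ hpos
    simp only [hφdef, mul_zero, neg_zero, Real.exp_zero, one_mul] at hφle
    have huθ := hnonneg θ hθmem
    have h1 : Real.exp (-(lam * θ)) * (lam * u θ) ≤ 0 := by nlinarith
    have h2 : lam * u θ ≤ 0 := by
      by_contra h
      push_neg at h
      nlinarith
    nlinarith
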